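/- Let p and N be primes with N ≡ 1 (mod p), ν = v_p(N-1), log : (Z/NZ)^× → Z/p^ν Z a surjective homomorphism, and χ a character of (Z/pZ)^× with χ ≠ 1, ω. Define L : I_H/I_H² → Z/p^ν Z by [a]-1 ↦ log(a), where I_H is the augmentation ideal of Z_p[(Z/NZ)^×]. Then φ_χ lies in I_H and L(φ_χ) ≡ -∑_{r=1}^{N-1} (∑_{a=1}^{r-1} χ^{-1}(a))·log(r) (mod p^ν). -/

import Mathlib

open Classical in
/-- The discrete logarithm attached to a homomorphism
`log : (Z/NZ)ˣ → Z/MZ`, extended by `0` to non-units of `Z/NZ`. -/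
noncomputable def dlog {N M : ℕ} (log : (ZMod N)ˣ →* Multiplicative (ZMod M))
    (x : ZMod N) : ZMod M :=
  if h : IsUnit x then Multiplicative.toAdd (log h.unit) else 0

/-- The periodic first Bernoulli function: `B̄₁(x) = x - ⌊x⌋ - 1/2` for `x ∉ ℤ`,
and `B̄₁(x) = 0` for `x ∈ ℤ`. -/
noncomputable def bernoulliB1 (x : ℚ) : ℚ :=
  if (⌊x⌋ : ℚ) = x then 0 else x - ⌊x⌋ - 1 / 2

open Classical in
/-- `χ⁻¹` extended to the natural numbers: `a ↦ χ(a)⁻¹ ∈ ℤ_p` if `a` is prime to `p`,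
and `0` otherwise. -/
noncomputable def chiInvZ {p : ℕ} [Fact p.Prime] (χ : (ZMod p)ˣ →* ℤ_[p]ˣ) (a : ℕ) : ℤ_[p] :=
  if h : IsUnit ((a : ZMod p)) then (((χ h.unit)⁻¹ : ℤ_[p]ˣ) : ℤ_[p]) else 0

/-! ### Auxiliary lemmas -/

section Aux

lemma StickAux.sum_dite_isUnit {M A : Type*} [Monoid M] [Fintype M] [DecidableEq M]
    [AddCommMonoid A] {inst : ∀ x : M, Decidable (IsUnit x)} (F : Mˣ → A) :
    (∑ x : M, @dite A (IsUnit x) (inst x) (fun h => F h.unit) (fun _ => 0)) = ∑ u : Mˣ, F u := by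
  classical
  have himg : ∀ x : M, x ∈ Finset.image (Units.val) (Finset.univ : Finset Mˣ) ↔ IsUnit x := by
    intro x
    simp only [Finset.mem_image, Finset.mem_univ, true_and]
    constructor
    · rintro ⟨u, rfl⟩; exact u.isUnit
    · rintro ⟨u, rfl⟩; exact ⟨u, rfl⟩
  rw [← Finset.sum_subset (Finset.subset_univ (Finset.image Units.val Finset.univ))]
  · rw [Finset.sum_image (fun a _ b _ h => Units.ext h)]
    refine Finset.sum_congr rfl fun u _ => ?_
    rw [dif_pos u.isUnit, IsUnit.unit_of_val_units]
  · intro x _ hx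
    rw [dif_neg]
    exact fun h => hx ((himg x).mpr h)

lemma StickAux.sum_units_inv_eq_zero {G : Type*} [Group G] [Fintype G] {R : Type*} [CommRing R]
    [IsDomain R] (χ : G →* Rˣ) (hχ : χ ≠ 1) : ∑ u : G, (((χ u)⁻¹ : Rˣ) : R) = 0 := by
  obtain ⟨g, hg⟩ : ∃ g, χ g ≠ 1 := by
    by_contra h
    push_neg at h
    exact hχ (MonoidHom.ext fun x => h x)
  have key : (((χ g)⁻¹ : Rˣ) : R) * ∑ u : G, (((χ u)⁻¹ : Rˣ) : R)
      = ∑ u : G, (((χ u)⁻¹ : Rˣ) : R) := by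
    rw [Finset.mul_sum]
    calc ∑ u : G, (((χ g)⁻¹ : Rˣ) : R) * (((χ u)⁻¹ : Rˣ) : R)
        = ∑ u : G, (((χ (g * u))⁻¹ : Rˣ) : R) := by
          refine Finset.sum_congr rfl fun u _ => ?_
          rw [map_mul, mul_inv, Units.val_mul]
      _ = ∑ u : G, (((χ u)⁻¹ : Rˣ) : R) :=
          Fintype.sum_equiv (Equiv.mulLeft g) _ _ fun u => rfl
  have h2 : ((((χ g)⁻¹ : Rˣ) : R) - 1) * ∑ u : G, (((χ u)⁻¹ : Rˣ) : R) = 0 := by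
    rw [sub_mul, one_mul, key, sub_self]
  rcases mul_eq_zero.mp h2 with h | h
  · exfalso
    apply hg
    have hc : (((χ g)⁻¹ : Rˣ) : R) = ((1 : Rˣ) : R) := by
      rw [Units.val_one]; exact sub_eq_zero.mp h
    have : (χ g)⁻¹ = 1 := Units.ext hc
    rwa [inv_eq_one] at this
  · exact h

lemma StickAux.sum_range_natCast_zmod {n : ℕ} [NeZero n] {A : Type*} [AddCommMonoid A]
    (F : ZMod n → A) : ∑ a ∈ Finset.range n, F (a : ZMod n) = ∑ x : ZMod n, F x := by
  refine Finset.sum_nbij' (fun a => (a : ZMod n)) (fun x => x.val) ?_ ?_ ?_ ?_ ?_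
  · intro a _; exact Finset.mem_univ _
  · intro x _; exact Finset.mem_range.mpr (ZMod.val_lt x)
  · intro a ha; exact ZMod.val_natCast_of_lt (Finset.mem_range.mp ha)
  · intro x _; exact ZMod.natCast_zmod_val x
  · intro a _; rfl

lemma StickAux.sum_swap_range {A : Type*} [AddCommMonoid A] (f : ℕ → A) (M : ℕ) :
    ∑ i ∈ Finset.range M, ∑ a ∈ Finset.range i, f a
      = ∑ a ∈ Finset.range M, (M - 1 - a) • f a := by
  induction M with
  | zero => simp
  | succ M ih =>
    rw [Finset.sum_range_succ, ih]
    rcases Nat.eq_zero_or_pos M with rfl | hM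
    · simp
    · rw [Finset.sum_range_succ (fun a => (M + 1 - 1 - a) • f a)]
      simp only [Nat.add_sub_cancel, Nat.sub_self, zero_smul, add_zero]
      rw [← Finset.sum_add_distrib]
      refine Finset.sum_congr rfl fun a ha => ?_
      have ha' : a < M := Finset.mem_range.mp ha
      have : M - a = (M - 1 - a) + 1 := by omega
      rw [this, add_smul, one_smul]

lemma StickAux.periodic_shift {A : Type*} (f : ℕ → A) (p : ℕ)
    (hf : ∀ a, f (a + p) = f a) : ∀ m j, f (m * p + j) = f j := by
  intro m
  induction m with
  | zero => intro j; simp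
  | succ m ih =>
    intro j
    have : (m + 1) * p + j = (m * p + j) + p := by ring
    rw [this, hf, ih]

lemma StickAux.sum_range_mul_periodic {A : Type*} [AddCommMonoid A] (f : ℕ → A) (p : ℕ)
    (hf : ∀ a, f (a + p) = f a) (m : ℕ) :
    ∑ a ∈ Finset.range (m * p), f a = m • (∑ a ∈ Finset.range p, f a) := by
  induction m with
  | zero => simp
  | succ m ih =>
    rw [Nat.succ_mul, Finset.sum_range_add, ih, succ_nsmul]
    congr 1
    exact Finset.sum_congr rfl fun j _ => StickAux.periodic_shift f p hf m j

lemma StickAux.sum_range_mul_cast_periodic {R : Type*} [CommRing R] (f : ℕ → R) (p : ℕ)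
    (hf : ∀ a, f (a + p) = f a) (h0 : ∑ b ∈ Finset.range p, f b = 0) (m : ℕ) :
    ∑ a ∈ Finset.range (m * p), (a : R) * f a
      = m • ∑ b ∈ Finset.range p, (b : R) * f b := by
  induction m with
  | zero => simp
  | succ m ih =>
    rw [Nat.succ_mul, Finset.sum_range_add, ih, succ_nsmul]
    congr 1
    calc ∑ j ∈ Finset.range p, ((m * p + j : ℕ) : R) * f (m * p + j)
        = ∑ j ∈ Finset.range p, (((m * p : ℕ) : R) * f j + (j : R) * f j) := by
          refine Finset.sum_congr rfl fun j _ => ?_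
          rw [StickAux.periodic_shift f p hf m j]
          push_cast
          ring
      _ = ∑ j ∈ Finset.range p, (j : R) * f j := by
          rw [Finset.sum_add_distrib, ← Finset.mul_sum, h0, mul_zero, zero_add]

lemma StickAux.zmod_two_units : ∀ u : (ZMod 2)ˣ, u = 1 := by decide

lemma StickAux.chiInvZ_congr {p : ℕ} [Fact p.Prime] (χ : (ZMod p)ˣ →* ℤ_[p]ˣ) {a b : ℕ}
    (h : (a : ZMod p) = (b : ZMod p)) : chiInvZ χ a = chiInvZ χ b := by
  unfold chiInvZ
  simp only [h]

lemma StickAux.chiInvZ_period {p : ℕ} [Fact p.Prime] (χ : (ZMod p)ˣ →* ℤ_[p]ˣ) (a : ℕ) :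
    chiInvZ χ (a + p) = chiInvZ χ a := by
  refine StickAux.chiInvZ_congr χ ?_
  push_cast
  simp

lemma StickAux.chiInvZ_zero {p : ℕ} [Fact p.Prime] (χ : (ZMod p)ˣ →* ℤ_[p]ˣ) :
    chiInvZ χ 0 = 0 := by
  unfold chiInvZ
  rw [dif_neg]
  rw [Nat.cast_zero]
  intro h
  have := (ZMod.isUnit_iff_coprime 0 p).mp (by simpa using h)
  simp [Nat.coprime_zero_left] at this
  exact (Fact.out : p.Prime).ne_one this

lemma StickAux.chiInvZ_sum_zero {p : ℕ} [Fact p.Prime] (χ : (ZMod p)ˣ →* ℤ_[p]ˣ)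
    (hχ : χ ≠ 1) : ∑ a ∈ Finset.range p, chiInvZ χ a = 0 := by
  haveI : NeZero p := ⟨(Fact.out : p.Prime).ne_zero⟩
  have : ∑ a ∈ Finset.range p, chiInvZ χ a
      = ∑ x : ZMod p, (if h : IsUnit x then (((χ h.unit)⁻¹ : ℤ_[p]ˣ) : ℤ_[p]) else 0) :=
    StickAux.sum_range_natCast_zmod (fun x => if h : IsUnit x then (((χ h.unit)⁻¹ : ℤ_[p]ˣ) : ℤ_[p]) else 0)
  rw [this]
  exact (StickAux.sum_dite_isUnit fun u => (((χ u)⁻¹ : ℤ_[p]ˣ) : ℤ_[p])).trans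
    (StickAux.sum_units_inv_eq_zero χ hχ)

lemma StickAux.bernoulliB1_eval {p a : ℕ} (hp : 0 < p) (h0 : 0 < a) (hap : a < p) :
    bernoulliB1 ((a : ℚ) / (p : ℚ)) = (a : ℚ) / (p : ℚ) - 1 / 2 := by
  have hlt : (a : ℚ) / (p : ℚ) < 1 := by
    rw [div_lt_one (by exact_mod_cast hp)]
    exact_mod_cast hap
  have hpos : 0 < (a : ℚ) / (p : ℚ) :=
    div_pos (by exact_mod_cast h0) (by exact_mod_cast hp)
  have hfl : ⌊(a : ℚ) / (p : ℚ)⌋ = 0 := by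
    rw [Int.floor_eq_zero_iff]
    exact ⟨le_of_lt hpos, hlt⟩
  rw [bernoulliB1, hfl]
  rw [if_neg (by push_cast; linarith)]
  push_cast
  ring

lemma StickAux.p_mul_B1 {p : ℕ} [Fact p.Prime] (χ : (ZMod p)ˣ →* ℤ_[p]ˣ) (B1χ : ℤ_[p])
    (hzero : ∑ a ∈ Finset.range p, chiInvZ χ a = 0)
    (hB1χ : (B1χ : ℚ_[p]) = ∑ a ∈ Finset.range p,
      (bernoulliB1 ((a : ℚ) / (p : ℚ)) : ℚ_[p]) * ((chiInvZ χ a : ℤ_[p]) : ℚ_[p])) :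
    (p : ℤ_[p]) * B1χ = ∑ a ∈ Finset.range p, (a : ℤ_[p]) * chiInvZ χ a := by
  have hp : 0 < p := (Fact.out : p.Prime).pos
  apply Subtype.coe_injective
  push_cast [PadicInt.coe_mul, PadicInt.coe_natCast]
  have hsum : ((∑ a ∈ Finset.range p, (a : ℤ_[p]) * chiInvZ χ a : ℤ_[p]) : ℚ_[p])
      = ∑ a ∈ Finset.range p, (a : ℚ_[p]) * ((chiInvZ χ a : ℤ_[p]) : ℚ_[p]) := by
    rw [show ((↑) : ℤ_[p] → ℚ_[p]) = (PadicInt.Coe.ringHom : ℤ_[p] →+* ℚ_[p]) from rfl,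
      map_sum]
    simp [PadicInt.coe_mul, PadicInt.coe_natCast]
  rw [hsum, hB1χ, Finset.mul_sum]
  have hz : ∑ a ∈ Finset.range p, ((chiInvZ χ a : ℤ_[p]) : ℚ_[p]) = 0 := by
    rw [show ((↑) : ℤ_[p] → ℚ_[p]) = (PadicInt.Coe.ringHom : ℤ_[p] →+* ℚ_[p]) from rfl,
      ← map_sum, hzero, map_zero]
  calc ∑ a ∈ Finset.range p,
        (p : ℚ_[p]) * ((bernoulliB1 ((a : ℚ) / (p : ℚ)) : ℚ_[p]) * ((chiInvZ χ a : ℤ_[p]) : ℚ_[p]))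
      = ∑ a ∈ Finset.range p, ((a : ℚ_[p]) * ((chiInvZ χ a : ℤ_[p]) : ℚ_[p])
          - ((p : ℚ_[p]) / 2) * ((chiInvZ χ a : ℤ_[p]) : ℚ_[p])) := by
        refine Finset.sum_congr rfl fun a ha => ?_
        rcases Nat.eq_zero_or_pos a with rfl | ha0
        · simp [bernoulliB1, StickAux.chiInvZ_zero]
        · rw [StickAux.bernoulliB1_eval hp ha0 (Finset.mem_range.mp ha)]
          have hpQ : ((p : ℚ_[p])) ≠ 0 := by
            exact_mod_cast hp.ne'
          push_cast
          field_simp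
    _ = ∑ a ∈ Finset.range p, (a : ℚ_[p]) * ((chiInvZ χ a : ℤ_[p]) : ℚ_[p]) := by
        rw [Finset.sum_sub_distrib, ← Finset.mul_sum, hz, mul_zero, sub_zero]

end Aux

/-- Let `p, N` be primes with `N ≡ 1 (mod p)`, `ν = v_p(N-1)`,
`log : (Z/NZ)ˣ → Z/p^ν Z` surjective, and `χ ≠ 1, ω` a character of `(Z/pZ)ˣ`. The
twisted Stickelberger element `φ_χ = ∑_{r=1}^{N-1} (B_{1,χ⁻¹} + ∑_{a<r} χ⁻¹(a))·[r⁻¹]`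
lies in the augmentation ideal `I_H` of `ℤ_p[(Z/NZ)ˣ]` (its augmentation vanishes), and
the map `L : I_H/I_H² → Z/p^ν Z, [a]-1 ↦ log a` sends it to
`-∑_{r=1}^{N-1} (∑_{a=1}^{r-1} χ⁻¹(a))·log(r) (mod p^ν)`. -/
theorem stickelberger_log_image (p N ν : ℕ) [Fact p.Prime] (hN : N.Prime)
    (hdvd : p ∣ N - 1) (hν : ν = (N - 1).factorization p)
    (log : (ZMod N)ˣ →* Multiplicative (ZMod (p ^ ν)))
    (hlog : Function.Surjective log)
    (ω : (ZMod p)ˣ →* ℤ_[p]ˣ)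
    (hω : ∀ a : (ZMod p)ˣ, PadicInt.toZMod ((ω a : ℤ_[p]ˣ) : ℤ_[p]) = (a : ZMod p))
    (χ : (ZMod p)ˣ →* ℤ_[p]ˣ) (hχ1 : χ ≠ 1) (hχω : χ ≠ ω)
    (B1χ : ℤ_[p])
    (hB1χ : (B1χ : ℚ_[p]) = ∑ a ∈ Finset.range p,
      (bernoulliB1 ((a : ℚ) / (p : ℚ)) : ℚ_[p]) * ((chiInvZ χ a : ℤ_[p]) : ℚ_[p])) :
    (∑ r ∈ Finset.Icc 1 (N - 1), (B1χ + ∑ a ∈ Finset.range r, chiInvZ χ a) = 0)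
    ∧ (∑ r ∈ Finset.Icc 1 (N - 1),
          (PadicInt.toZModPow ν (B1χ + ∑ a ∈ Finset.range r, chiInvZ χ a))
            * dlog log ((r : ZMod N)⁻¹)
        = - ∑ r ∈ Finset.Icc 1 (N - 1),
            (PadicInt.toZModPow ν (∑ a ∈ Finset.range r, chiInvZ χ a))
              * dlog log (r : ZMod N)) := by
  haveI hNF : Fact N.Prime := ⟨hN⟩
  have hppos : 0 < p := (Fact.out : p.Prime).pos
  have hN2 : 2 ≤ N := hN.two_le
  set f : ℕ → ℤ_[p] := chiInvZ χ with hf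
  have hper : ∀ a, f (a + p) = f a := StickAux.chiInvZ_period χ
  have hzero : ∑ a ∈ Finset.range p, f a = 0 := StickAux.chiInvZ_sum_zero χ hχ1
  have hpB : (p : ℤ_[p]) * B1χ = ∑ a ∈ Finset.range p, (a : ℤ_[p]) * f a :=
    StickAux.p_mul_B1 χ B1χ hzero hB1χ
  obtain ⟨m, hm⟩ : ∃ m, N - 1 = m * p := by
    obtain ⟨m, hm'⟩ := hdvd
    exact ⟨m, by rw [hm', Nat.mul_comm]⟩
  have hM1 : (N - 1) + 1 = N := by omega
  -- Part 1
  have hIcc : Finset.Icc 1 (N - 1) = Finset.Ico 1 N := by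
    ext x
    simp only [Finset.mem_Icc, Finset.mem_Ico]
    omega
  have hsum_shift : ∀ (g : ℕ → ℤ_[p]), ∑ r ∈ Finset.Icc 1 (N - 1), g r
      = ∑ i ∈ Finset.range (N - 1), g (1 + i) := by
    intro g
    rw [hIcc, Finset.sum_Ico_eq_sum_range]
  have hsum_shiftZ : ∀ (g : ℕ → ZMod (p ^ ν)), ∑ r ∈ Finset.Icc 1 (N - 1), g r
      = ∑ i ∈ Finset.range (N - 1), g (1 + i) := by
    intro g
    rw [hIcc, Finset.sum_Ico_eq_sum_range]
  have hSsum : ∑ i ∈ Finset.range (N - 1), (∑ a ∈ Finset.range (1 + i), f a)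
      = ∑ a ∈ Finset.range (N - 1), ((N - 1 : ℕ) - (a : ℤ_[p])) * f a := by
    have h1 : ∑ i ∈ Finset.range (N - 1), (∑ a ∈ Finset.range (1 + i), f a)
        = ∑ i ∈ Finset.range ((N - 1) + 1), ∑ a ∈ Finset.range i, f a := by
      rw [Finset.sum_range_succ' (fun i => ∑ a ∈ Finset.range i, f a) (N - 1)]
      rw [Finset.range_zero, Finset.sum_empty, add_zero]
      exact Finset.sum_congr rfl fun i _ => by rw [Nat.add_comm]
    rw [h1, StickAux.sum_swap_range f ((N - 1) + 1), Finset.sum_range_succ]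
    simp only [Nat.add_sub_cancel, Nat.sub_self, zero_smul, add_zero]
    refine Finset.sum_congr rfl fun a ha => ?_
    have ha' : a < N - 1 := Finset.mem_range.mp ha
    rw [nsmul_eq_mul, Nat.cast_sub (by omega : a ≤ N - 1)]
  have hfM : ∑ a ∈ Finset.range (N - 1), f a = 0 := by
    rw [hm, StickAux.sum_range_mul_periodic f p hper m, hzero, smul_zero]
  have hafM : ∑ a ∈ Finset.range (N - 1), (a : ℤ_[p]) * f a = ((N - 1 : ℕ) : ℤ_[p]) * B1χ := by
    rw [hm, StickAux.sum_range_mul_cast_periodic f p hper hzero m, ← hpB, nsmul_eq_mul]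
    push_cast
    ring
  have part1 : ∑ r ∈ Finset.Icc 1 (N - 1), (B1χ + ∑ a ∈ Finset.range r, f a) = 0 := by
    rw [hsum_shift (fun r => B1χ + ∑ a ∈ Finset.range r, f a)]
    rw [Finset.sum_add_distrib, Finset.sum_const, Finset.card_range, hSsum]
    have hsplit : ∑ a ∈ Finset.range (N - 1), (((N - 1 : ℕ) : ℤ_[p]) - (a : ℤ_[p])) * f a
        = ((N - 1 : ℕ) : ℤ_[p]) * (∑ a ∈ Finset.range (N - 1), f a)
          - ∑ a ∈ Finset.range (N - 1), (a : ℤ_[p]) * f a := by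
      rw [Finset.mul_sum, ← Finset.sum_sub_distrib]
      exact Finset.sum_congr rfl fun a _ => by ring
    rw [hsplit, hfM, hafM, nsmul_eq_mul, mul_zero, zero_sub]
    ring
  refine ⟨part1, ?_⟩
  -- Part 2
  have hp2 : p ≠ 2 := by
    rintro rfl
    apply hχ1
    refine MonoidHom.ext fun u => ?_
    rw [StickAux.zmod_two_units u, map_one, map_one]
  have hpodd : Odd p := (Fact.out : p.Prime).odd_of_ne_two hp2
  have hunit : ∀ r, r ∈ Finset.Icc 1 (N - 1) → IsUnit ((r : ZMod N)) := by
    intro r hr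
    rw [Finset.mem_Icc] at hr
    rw [isUnit_iff_ne_zero]
    intro h0
    rw [ZMod.natCast_eq_zero_iff] at h0
    have := Nat.le_of_dvd (by omega) h0
    omega
  have hdloginv : ∀ x : ZMod N, IsUnit x → dlog log x⁻¹ = - dlog log x := by
    intro x hx
    have hx0 : x ≠ 0 := hx.ne_zero
    have hxinv : IsUnit x⁻¹ := isUnit_iff_ne_zero.mpr (inv_ne_zero hx0)
    unfold dlog
    rw [dif_pos hx, dif_pos hxinv]
    have hu : hxinv.unit = (hx.unit)⁻¹ := by
      apply Units.ext
      rw [IsUnit.unit_spec, Units.val_inv_eq_inv_val, IsUnit.unit_spec]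
    rw [hu, map_inv, toAdd_inv]
  have hdlogsum : ∑ r ∈ Finset.Icc 1 (N - 1), dlog log ((r : ZMod N)) = 0 := by
    have h1 : ∑ r ∈ Finset.range N, dlog log ((r : ZMod N))
        = ∑ x : ZMod N, dlog log x :=
      StickAux.sum_range_natCast_zmod (fun x => dlog log x)
    have h2 : ∑ x : ZMod N, dlog log x
        = ∑ u : (ZMod N)ˣ, Multiplicative.toAdd (log u) := by
      unfold dlog
      exact StickAux.sum_dite_isUnit (fun u => Multiplicative.toAdd (log u))
    have h3 : ∑ u : (ZMod N)ˣ, Multiplicative.toAdd (log u) = 0 := by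
      set T := ∑ u : (ZMod N)ˣ, Multiplicative.toAdd (log u) with hT
      have hTT : T = -T := by
        rw [hT]
        calc ∑ u : (ZMod N)ˣ, Multiplicative.toAdd (log u)
            = ∑ u : (ZMod N)ˣ, Multiplicative.toAdd (log u⁻¹) :=
              (Fintype.sum_equiv (Equiv.inv _) _ _ fun u => rfl).symm
          _ = ∑ u : (ZMod N)ˣ, - Multiplicative.toAdd (log u) := by
              refine Finset.sum_congr rfl fun u _ => ?_
              rw [map_inv, toAdd_inv]
          _ = - ∑ u : (ZMod N)ˣ, Multiplicative.toAdd (log u) := by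
              rw [Finset.sum_neg_distrib]
      have h2T : (2 : ZMod (p ^ ν)) * T = 0 := by
        have hadd : T + T = 0 := by
          nth_rewrite 1 [hTT]
          ring
        rw [two_mul, hadd]
      have hu2 : IsUnit (2 : ZMod (p ^ ν)) := by
        have : IsUnit ((2 : ℕ) : ZMod (p ^ ν)) := by
          rw [ZMod.isUnit_iff_coprime]
          exact Nat.Coprime.pow_right _ (Nat.coprime_two_left.mpr hpodd)
        simpa using this
      obtain ⟨v, hv⟩ := hu2
      have hfin := congrArg (fun z => ((v⁻¹ : (ZMod (p ^ ν))ˣ) : ZMod (p ^ ν)) * z) h2T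
      simpa [← hv, ← mul_assoc] using hfin
    have h0 : dlog log ((0 : ℕ) : ZMod N) = 0 := by
      unfold dlog
      rw [dif_neg]
      rw [Nat.cast_zero]
      exact not_isUnit_zero
    have hrange : ∑ r ∈ Finset.range N, dlog log ((r : ZMod N))
        = (∑ r ∈ Finset.Icc 1 (N - 1), dlog log ((r : ZMod N)))
          + dlog log ((0 : ℕ) : ZMod N) := by
      have hrw : Finset.range N = Finset.range ((N - 1) + 1) := by rw [hM1]
      rw [hrw, Finset.sum_range_succ' (fun r => dlog log ((r : ZMod N))) (N - 1),
        hsum_shiftZ (fun r => dlog log ((r : ZMod N)))]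
      have hcomm : ∑ i ∈ Finset.range (N - 1), dlog log (((i + 1 : ℕ)) : ZMod N)
          = ∑ i ∈ Finset.range (N - 1), dlog log (((1 + i : ℕ)) : ZMod N) :=
        Finset.sum_congr rfl fun i _ => by rw [Nat.add_comm]
      rw [hcomm]
    have := h1.trans (h2.trans h3)
    rw [hrange, h0, add_zero] at this
    exact this
  have step : ∀ r ∈ Finset.Icc 1 (N - 1),
      (PadicInt.toZModPow ν (B1χ + ∑ a ∈ Finset.range r, f a)) * dlog log ((r : ZMod N)⁻¹)
        = -((PadicInt.toZModPow ν B1χ) * dlog log ((r : ZMod N)))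
          - (PadicInt.toZModPow ν (∑ a ∈ Finset.range r, f a)) * dlog log ((r : ZMod N)) := by
    intro r hr
    rw [hdloginv _ (hunit r hr), map_add]
    ring
  rw [Finset.sum_congr rfl step, Finset.sum_sub_distrib, Finset.sum_neg_distrib,
    ← Finset.mul_sum, hdlogsum, mul_zero, neg_zero, zero_sub]
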